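/- Let N, t be positive integers with t ≥ 2, let G be a K_t-free graph, let ℓ ≥ 3, and let q be the probability that t i.i.d. uniform vertices of G form an independent set. Suppose C(N,t) · q^{ℓ-2} · 2^{1-C(t,2)} < 1, where C(n,k) denotes the binomial coefficient. Then there exists an ℓ-coloring of the edges of K_N with no monochromatic K_t; in particular r(t;ℓ) > N. -/

import Mathlib

open Filter

/-- Probability that `t` i.i.d. uniform vertices of `G` (with repetition) form an independent
set: the fraction of functions `Fin t → V` whose image is independent in `G`. -/
noncomputable def indepProb (t : ℕ) {V : Type} [Fintype V] (G : SimpleGraph V) : ℝ :=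
  (Nat.card {f : Fin t → V // ∀ i j, ¬ G.Adj (f i) (f j)} : ℝ) / (Fintype.card V : ℝ) ^ t

/-- `c_{t,t}`: the infimum over all (nonempty, finite) `K_t`-free graphs of the probability that
`t` i.i.d. uniform vertices form an independent set. -/
noncomputable def cParam (t : ℕ) : ℝ :=
  sInf { q : ℝ | ∃ M : ℕ, 0 < M ∧ ∃ G : SimpleGraph (Fin M), G.CliqueFree t ∧ q = indepProb t G }

/-- Every `ℓ`-coloring of the edges of `K_N` has a monochromatic `K_t`. -/
def ramseyProp (N t ℓ : ℕ) : Prop :=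
  ∀ c : Sym2 (Fin N) → Fin ℓ, ∃ i : Fin ℓ, ∃ S : Finset (Fin N), S.card = t ∧
    ∀ x ∈ S, ∀ y ∈ S, x ≠ y → c s(x, y) = i

/-- The multicolor Ramsey number `r(t; ℓ)`. -/
noncomputable def multiRamsey (t ℓ : ℕ) : ℕ := sInf {N | ramseyProp N t ℓ}

open Classical

/-! ### Auxiliary results: Ramsey's theorem (to show `multiRamsey` is well defined) -/

lemma ramsey_chain {ℓ N : ℕ} (hℓ : 0 < ℓ) (c : Sym2 (Fin N) → Fin ℓ) :
    ∀ (m : ℕ) (A : Finset (Fin N)), (ℓ+1)^m ≤ A.card →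
    ∃ (T : Finset (Fin N)) (γ : Fin N → Fin ℓ), T ⊆ A ∧ T.card = m ∧
      ∀ x ∈ T, ∀ y ∈ T, x < y → c s(x,y) = γ x := by
  intro m
  induction m with
  | zero => exact fun A _ => ⟨∅, fun _ => ⟨0, hℓ⟩, by simp, by simp, by simp⟩
  | succ m ih =>
    intro A hA
    have hA0 : A.Nonempty := by
      rw [← Finset.card_pos]
      calc 0 < (ℓ+1)^(m+1) := Nat.pow_pos (by omega)
        _ ≤ A.card := hA
    set v := A.min' hA0 with hv
    have hvA : v ∈ A := A.min'_mem hA0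
    set B := A.erase v with hB
    have hBcard : ℓ * (ℓ+1)^m ≤ B.card := by
      have : B.card = A.card - 1 := by rw [hB, Finset.card_erase_of_mem hvA]
      have h2 : (ℓ+1)^(m+1) = ℓ * (ℓ+1)^m + (ℓ+1)^m := by ring
      have h3 : 1 ≤ (ℓ+1)^m := Nat.one_le_pow _ _ (by omega)
      omega
    have hpig : ∃ i ∈ (Finset.univ : Finset (Fin ℓ)),
        (ℓ+1)^m ≤ (B.filter fun y => c s(v,y) = i).card := by
      apply Finset.exists_le_card_fiber_of_mul_le_card_of_maps_to
        (fun a _ => Finset.mem_univ _) ⟨⟨0, hℓ⟩, Finset.mem_univ _⟩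
      simpa [mul_comm] using hBcard
    obtain ⟨i, -, hi⟩ := hpig
    obtain ⟨T', γ', hT'sub, hT'card, hT'mono⟩ := ih _ hi
    have hT'B : T' ⊆ B := hT'sub.trans (Finset.filter_subset _ _)
    have hvT' : v ∉ T' := fun h => (Finset.mem_erase.mp (hT'B h)).1 rfl
    refine ⟨insert v T', Function.update γ' v i, ?_, ?_, ?_⟩
    · intro x hx
      rcases Finset.mem_insert.mp hx with rfl | hx
      · exact hvA
      · exact (Finset.mem_erase.mp (hT'B hx)).2
    · rw [Finset.card_insert_of_notMem hvT', hT'card]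
    · intro x hx y hy hxy
      rcases Finset.mem_insert.mp hx with rfl | hx
      · rcases Finset.mem_insert.mp hy with rfl | hy
        · exact absurd hxy (lt_irrefl _)
        · have := (Finset.mem_filter.mp (hT'sub hy)).2
          rw [Function.update_self]
          exact this
      · have hxv : x ≠ v := fun h => hvT' (h ▸ hx)
        rcases Finset.mem_insert.mp hy with rfl | hy
        · exact absurd (A.min'_le x ((Finset.mem_erase.mp (hT'B hx)).2)) (by omega)
        · rw [Function.update_of_ne hxv]
          exact hT'mono x hx y hy hxy

lemma ramseyProp_holds (t ℓ : ℕ) (hℓ : 0 < ℓ) : ramseyProp ((ℓ+1)^(ℓ*(t-1)+1)) t ℓ := by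
  intro c
  obtain ⟨T, γ, -, hTcard, hmono⟩ :=
    ramsey_chain hℓ c (ℓ*(t-1)+1) Finset.univ (by simp)
  have hpig : ∃ i ∈ (Finset.univ : Finset (Fin ℓ)),
      (t-1) < (T.filter fun x => γ x = i).card := by
    apply Finset.exists_lt_card_fiber_of_mul_lt_card_of_maps_to
      (fun a _ => Finset.mem_univ _)
    rw [hTcard]
    simp [Finset.card_univ, mul_comm]
  obtain ⟨i, -, hi⟩ := hpig
  obtain ⟨S, hSsub, hScard⟩ := Finset.exists_subset_card_eq
    (show t ≤ (T.filter fun x => γ x = i).card by omega)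
  refine ⟨i, S, hScard, ?_⟩
  intro x hx y hy hxy
  have hx' := Finset.mem_filter.mp (hSsub hx)
  have hy' := Finset.mem_filter.mp (hSsub hy)
  rcases lt_or_gt_of_ne hxy with h | h
  · rw [hmono x hx'.1 y hy'.1 h, hx'.2]
  · rw [Sym2.eq_swap, hmono y hy'.1 x hx'.1 h, hy'.2]

lemma ramseyProp_mono {n n' t ℓ : ℕ} (h : n ≤ n') (hr : ramseyProp n t ℓ) :
    ramseyProp n' t ℓ := by
  intro c
  obtain ⟨i, S, hcard, hmono⟩ := hr (fun e => c (e.map (Fin.castLE h)))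
  refine ⟨i, S.map (Fin.castLEEmb h), by rw [Finset.card_map, hcard], ?_⟩
  intro x hx y hy hxy
  obtain ⟨a, ha, rfl⟩ := Finset.mem_map.mp hx
  obtain ⟨b, hb, rfl⟩ := Finset.mem_map.mp hy
  have hab : a ≠ b := fun hh => hxy (by rw [hh])
  have := hmono a ha b hb hab
  simpa [Sym2.map_pair_eq, Fin.castLEEmb] using this

/-! ### The random coloring and the `Bad` event -/

noncomputable def edgeAdj {N M : ℕ} (G : SimpleGraph (Fin M)) (f : Fin N → Fin M) :
    Sym2 (Fin N) → Prop :=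
  Sym2.lift ⟨fun x y => G.Adj (f x) (f y), fun _ _ => propext (G.adj_comm _ _)⟩

lemma edgeAdj_mk {N M : ℕ} (G : SimpleGraph (Fin M)) (f : Fin N → Fin M) (x y : Fin N) :
    edgeAdj G f s(x,y) ↔ G.Adj (f x) (f y) := Iff.rfl

noncomputable def myColoring {N M ℓ : ℕ} (hℓ : 3 ≤ ℓ) (G : SimpleGraph (Fin M))
    (f : Fin (ℓ-2) → Fin N → Fin M) (g : Sym2 (Fin N) → Fin 2) (e : Sym2 (Fin N)) : Fin ℓ :=
  if h : ∃ i : Fin (ℓ-2), edgeAdj G (f i) e then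
    ⟨(h.choose : ℕ), by have := h.choose.isLt; omega⟩
  else ⟨(ℓ-2) + (g e : ℕ), by have := (g e).isLt; omega⟩

def Bad {N M : ℕ} (t L : ℕ) (G : SimpleGraph (Fin M))
    (ω : (Fin L → Fin N → Fin M) × (Sym2 (Fin N) → Fin 2)) : Prop :=
  ∃ S : Finset (Fin N), S.card = t ∧
    (∀ i : Fin L, ∀ x ∈ S, ∀ y ∈ S, x ≠ y → ¬ G.Adj (ω.1 i x) (ω.1 i y)) ∧
    ∃ b : Fin 2, ∀ x ∈ S, ∀ y ∈ S, x ≠ y → ω.2 s(x,y) = b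

lemma no_mono_of_not_bad {N M ℓ t : ℕ} (hℓ : 3 ≤ ℓ) (G : SimpleGraph (Fin M))
    (hG : G.CliqueFree t)
    (ω : (Fin (ℓ-2) → Fin N → Fin M) × (Sym2 (Fin N) → Fin 2))
    (hbad : ¬ Bad t (ℓ-2) G ω) :
    ¬ ∃ i : Fin ℓ, ∃ S : Finset (Fin N), S.card = t ∧
        ∀ x ∈ S, ∀ y ∈ S, x ≠ y → myColoring hℓ G ω.1 ω.2 s(x, y) = i := by
  rintro ⟨i, S, hcard, hmono⟩
  by_cases hi : (i : ℕ) < ℓ - 2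
  · have key : ∀ x ∈ S, ∀ y ∈ S, x ≠ y → G.Adj (ω.1 ⟨i, hi⟩ x) (ω.1 ⟨i, hi⟩ y) := by
      intro x hx y hy hxy
      have hc := hmono x hx y hy hxy
      by_cases hex : ∃ k : Fin (ℓ-2), edgeAdj G (ω.1 k) s(x,y)
      · rw [myColoring, dif_pos hex] at hc
        have h1 : (hex.choose : ℕ) = (i : ℕ) := congrArg Fin.val hc
        have h2 := hex.choose_spec
        have h3 : hex.choose = ⟨(i : ℕ), hi⟩ := Fin.ext h1
        rw [h3] at h2
        exact (edgeAdj_mk G _ x y).mp h2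
      · rw [myColoring, dif_neg hex] at hc
        have := congrArg Fin.val hc
        simp only [Fin.val_mk] at this
        omega
    have hclique : G.IsNClique t (S.image (ω.1 ⟨i, hi⟩)) := by
      constructor
      · intro a ha b hb hab
        obtain ⟨x, hx, rfl⟩ := Finset.mem_image.mp ha
        obtain ⟨y, hy, rfl⟩ := Finset.mem_image.mp hb
        have hxy : x ≠ y := by rintro rfl; exact hab rfl
        exact key x hx y hy hxy
      · rw [Finset.card_image_of_injOn, hcard]
        intro x hx y hy hfe
        by_contra hxy
        have := key x hx y hy hxy
        rw [hfe] at this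
        exact G.irrefl this
    exact hG _ hclique
  · apply hbad
    have hiℓ := i.isLt
    have both : ∀ x ∈ S, ∀ y ∈ S, x ≠ y →
        (∀ k : Fin (ℓ-2), ¬ G.Adj (ω.1 k x) (ω.1 k y)) ∧
          ω.2 s(x,y) = ⟨(i : ℕ) - (ℓ-2), by omega⟩ := by
      intro x hx y hy hxy
      have hc := hmono x hx y hy hxy
      by_cases hex : ∃ k : Fin (ℓ-2), edgeAdj G (ω.1 k) s(x,y)
      · rw [myColoring, dif_pos hex] at hc
        have h1 : (hex.choose : ℕ) = (i : ℕ) := congrArg Fin.val hc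
        have := hex.choose.isLt
        omega
      · rw [myColoring, dif_neg hex] at hc
        push_neg at hex
        refine ⟨fun k => fun hadj => hex k ((edgeAdj_mk G _ x y).mpr hadj), ?_⟩
        have h1 : ℓ - 2 + ((ω.2 s(x,y) : ℕ)) = (i : ℕ) := congrArg Fin.val hc
        exact Fin.ext (by simp only [Fin.val_mk]; omega)
    exact ⟨S, hcard, fun k x hx y hy hxy => (both x hx y hy hxy).1 k,
      ⟨(⟨(i : ℕ) - (ℓ-2), by omega⟩ : Fin 2), fun x hx y hy hxy => (both x hx y hy hxy).2⟩⟩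

/-! ### Counting -/

lemma ES_card {α : Type*} [DecidableEq α] (S : Finset α) :
    (S.sym2.filter fun e => ¬ e.IsDiag).card = S.card.choose 2 := by
  have hsplit := Finset.card_filter_add_card_filter_not
    (s := S.sym2) (p := fun e => e.IsDiag)
  have hdiag : (S.sym2.filter fun e => e.IsDiag) = S.image Sym2.diag := by
    ext e
    induction e using Sym2.inductionOn with
    | hf x y =>
      simp only [Finset.mem_filter, Finset.mem_image, Finset.mk_mem_sym2_iff,
        Sym2.mk_isDiag_iff]
      constructor
      · rintro ⟨⟨hx, hy⟩, rfl⟩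
        exact ⟨x, hx, rfl⟩
      · rintro ⟨a, ha, hae⟩
        rw [Sym2.diag, Sym2.eq_iff] at hae
        have hax : a = x ∧ a = y := by tauto
        obtain ⟨rfl, rfl⟩ := hax
        exact ⟨⟨ha, ha⟩, rfl⟩
  have hd : (S.sym2.filter fun e => e.IsDiag).card = S.card := by
    rw [hdiag, Finset.card_image_of_injective _ Sym2.diag_injective]
  have hc := Finset.card_sym2 S
  have h1 : (S.card + 1).choose 2 = S.card.choose 1 + S.card.choose 2 :=
    Nat.choose_succ_succ _ _
  rw [Nat.choose_one_right] at h1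
  omega

lemma card_eqOn {α : Type*} [Fintype α] [DecidableEq α] (E : Finset α) (b : Fin 2) :
    Fintype.card {g : α → Fin 2 // ∀ e ∈ E, g e = b} = 2 ^ (Fintype.card α - E.card) := by
  have equiv : {g : α → Fin 2 // ∀ e ∈ E, g e = b} ≃ ({e : α // e ∉ E} → Fin 2) :=
    { toFun := fun g e => g.1 e.1
      invFun := fun u => ⟨fun e => if h : e ∈ E then b else u ⟨e, h⟩, fun e he => dif_pos he⟩
      left_inv := fun g => Subtype.ext (funext fun e => by
        dsimp only
        split_ifs with h
        · exact (g.2 e h).symm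
        · rfl)
      right_inv := fun u => funext fun e => by dsimp only; rw [dif_neg e.2] }
  rw [Fintype.card_congr equiv, Fintype.card_fun, Fintype.card_fin]
  congr 1
  rw [Fintype.card_subtype_compl]
  congr 1
  simp [Fintype.card_subtype]

lemma constPart_le {N t : ℕ} (S : Finset (Fin N)) (hS : S.card = t) :
    Fintype.card {g : Sym2 (Fin N) → Fin 2 //
        ∃ b : Fin 2, ∀ x ∈ S, ∀ y ∈ S, x ≠ y → g s(x,y) = b}
      ≤ 2 * 2 ^ (Fintype.card (Sym2 (Fin N)) - t.choose 2) := by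
  set E := S.sym2.filter (fun e => ¬ e.IsDiag) with hE
  have hEc : E.card = t.choose 2 := by rw [hE, ES_card, hS]
  have hiff : ∀ (b : Fin 2) (g : Sym2 (Fin N) → Fin 2),
      (∀ x ∈ S, ∀ y ∈ S, x ≠ y → g s(x,y) = b) ↔ (∀ e ∈ E, g e = b) := by
    intro b g
    constructor
    · intro hg e he
      induction e using Sym2.inductionOn with
      | hf x y =>
        rw [hE, Finset.mem_filter, Finset.mk_mem_sym2_iff, Sym2.mk_isDiag_iff] at he
        exact hg x he.1.1 y he.1.2 he.2
    · intro hg x hx y hy hxy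
      exact hg _ (by rw [hE]; simp only [Finset.mem_filter, Finset.mk_mem_sym2_iff,
        Sym2.mk_isDiag_iff]; exact ⟨⟨hx, hy⟩, hxy⟩)
  have e1 : {g : Sym2 (Fin N) → Fin 2 // ∃ b : Fin 2, ∀ x ∈ S, ∀ y ∈ S, x ≠ y → g s(x,y) = b}
      ≃ {g : Sym2 (Fin N) → Fin 2 // (∀ e ∈ E, g e = 0) ∨ (∀ e ∈ E, g e = 1)} := by
    apply Equiv.subtypeEquivRight
    intro g
    rw [Fin.exists_fin_two, hiff 0 g, hiff 1 g]
  rw [Fintype.card_congr e1]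
  calc Fintype.card {g : Sym2 (Fin N) → Fin 2 // (∀ e ∈ E, g e = 0) ∨ (∀ e ∈ E, g e = 1)}
      ≤ Fintype.card {g : Sym2 (Fin N) → Fin 2 // ∀ e ∈ E, g e = 0}
        + Fintype.card {g : Sym2 (Fin N) → Fin 2 // ∀ e ∈ E, g e = 1} :=
        Fintype.card_subtype_or _ _
    _ ≤ 2 * 2 ^ (Fintype.card (Sym2 (Fin N)) - t.choose 2) := by
        rw [card_eqOn E 0, card_eqOn E 1, hEc]; omega

def prodSubtypeFst {A B : Type*} (p : A → Prop) : {z : A × B // p z.1} ≃ {a // p a} × B where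
  toFun z := (⟨z.1.1, z.2⟩, z.1.2)
  invFun w := ⟨(w.1.1, w.2), w.1.2⟩
  left_inv _ := rfl
  right_inv _ := rfl

lemma indepPart_card {N M t : ℕ} (G : SimpleGraph (Fin M)) (S : Finset (Fin N))
    (hS : S.card = t) :
    Fintype.card {h : Fin N → Fin M // ∀ x ∈ S, ∀ y ∈ S, x ≠ y → ¬ G.Adj (h x) (h y)}
      = Nat.card {f : Fin t → Fin M // ∀ i j, ¬ G.Adj (f i) (f j)} * M ^ (N - t) := by
  rw [Nat.card_eq_fintype_card]
  have ε : {x // x ∈ S} ≃ Fin t := Fintype.equivFinOfCardEq (by rw [Fintype.card_coe, hS])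
  let E1 := Equiv.piEquivPiSubtypeProd (· ∈ S) (fun _ : Fin N => Fin M)
  have step1 : {h : Fin N → Fin M // ∀ x ∈ S, ∀ y ∈ S, x ≠ y → ¬ G.Adj (h x) (h y)}
      ≃ {z : ({x : Fin N // x ∈ S} → Fin M) × ({x : Fin N // ¬ x ∈ S} → Fin M) //
          ∀ a b : {x : Fin N // x ∈ S}, ¬ G.Adj (z.1 a) (z.1 b)} := by
    apply Equiv.subtypeEquiv E1
    intro h
    constructor
    · intro hh a b
      show ¬ G.Adj (h ↑a) (h ↑b)
      by_cases hab : (a : Fin N) = (b : Fin N)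
      · exact fun hadj => G.irrefl (hab ▸ hadj)
      · exact hh a a.2 b b.2 hab
    · intro hp x hx y hy hxy
      exact hp ⟨x, hx⟩ ⟨y, hy⟩
  have step3 : {u : {x : Fin N // x ∈ S} → Fin M // ∀ a b, ¬ G.Adj (u a) (u b)}
      ≃ {f : Fin t → Fin M // ∀ i j, ¬ G.Adj (f i) (f j)} := by
    apply Equiv.subtypeEquiv (Equiv.arrowCongr ε (Equiv.refl (Fin M)))
    intro u
    constructor
    · intro hu i j
      exact hu _ _
    · intro hu a b
      have := hu (ε a) (ε b)
      simpa using this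
  have main := step1.trans ((prodSubtypeFst _).trans (Equiv.prodCongr step3 (Equiv.refl _)))
  rw [Fintype.card_congr main, Fintype.card_prod, Fintype.card_fun, Fintype.card_fin]
  congr 2
  rw [Fintype.card_subtype_compl]
  simp [Fintype.card_subtype, hS]

lemma tuplePart_card {N M t L : ℕ} (G : SimpleGraph (Fin M)) (S : Finset (Fin N))
    (hS : S.card = t) :
    Fintype.card {f : Fin L → Fin N → Fin M //
        ∀ i, ∀ x ∈ S, ∀ y ∈ S, x ≠ y → ¬ G.Adj (f i x) (f i y)}
      = (Nat.card {f : Fin t → Fin M // ∀ i j, ¬ G.Adj (f i) (f j)} * M ^ (N - t)) ^ L := by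
  have e := Equiv.subtypePiEquivPi
    (p := fun (_ : Fin L) (h : Fin N → Fin M) => ∀ x ∈ S, ∀ y ∈ S, x ≠ y → ¬ G.Adj (h x) (h y))
  rw [Fintype.card_congr e, Fintype.card_pi]
  rw [Finset.prod_const, Finset.card_univ, Fintype.card_fin, indepPart_card G S hS]

lemma card_bad_le {N M t L : ℕ} (G : SimpleGraph (Fin M)) :
    Fintype.card {ω : (Fin L → Fin N → Fin M) × (Sym2 (Fin N) → Fin 2) // Bad t L G ω} ≤
      N.choose t * (Nat.card {f : Fin t → Fin M // ∀ i j, ¬ G.Adj (f i) (f j)} * M ^ (N - t)) ^ L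
        * (2 * 2 ^ (Fintype.card (Sym2 (Fin N)) - t.choose 2)) := by
  rw [Fintype.card_subtype]
  have hsub : Finset.univ.filter (Bad t L G) ⊆
      (Finset.univ.powersetCard t).biUnion (fun S => Finset.univ.filter
        (fun ω : (Fin L → Fin N → Fin M) × (Sym2 (Fin N) → Fin 2) =>
          (∀ i : Fin L, ∀ x ∈ S, ∀ y ∈ S, x ≠ y → ¬ G.Adj (ω.1 i x) (ω.1 i y)) ∧
          ∃ b : Fin 2, ∀ x ∈ S, ∀ y ∈ S, x ≠ y → ω.2 s(x,y) = b)) := by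
    intro ω hω
    obtain ⟨S, hcard, h1, h2⟩ := (Finset.mem_filter.mp hω).2
    exact Finset.mem_biUnion.mpr ⟨S, Finset.mem_powersetCard.mpr ⟨Finset.subset_univ _, hcard⟩,
      Finset.mem_filter.mpr ⟨Finset.mem_univ _, h1, h2⟩⟩
  refine le_trans (Finset.card_le_card hsub) (le_trans Finset.card_biUnion_le ?_)
  have hbound : ∀ S ∈ Finset.univ.powersetCard t,
      (Finset.univ.filter
        (fun ω : (Fin L → Fin N → Fin M) × (Sym2 (Fin N) → Fin 2) =>
          (∀ i : Fin L, ∀ x ∈ S, ∀ y ∈ S, x ≠ y → ¬ G.Adj (ω.1 i x) (ω.1 i y)) ∧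
          ∃ b : Fin 2, ∀ x ∈ S, ∀ y ∈ S, x ≠ y → ω.2 s(x,y) = b)).card ≤
        (Nat.card {f : Fin t → Fin M // ∀ i j, ¬ G.Adj (f i) (f j)} * M ^ (N - t)) ^ L
          * (2 * 2 ^ (Fintype.card (Sym2 (Fin N)) - t.choose 2)) := by
    intro S hSmem
    have hS : S.card = t := (Finset.mem_powersetCard.mp hSmem).2
    rw [← Fintype.card_subtype]
    rw [Fintype.card_congr (Equiv.subtypeProdEquivProd
      (p := fun f : Fin L → Fin N → Fin M =>
        ∀ i : Fin L, ∀ x ∈ S, ∀ y ∈ S, x ≠ y → ¬ G.Adj (f i x) (f i y))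
      (q := fun g : Sym2 (Fin N) → Fin 2 =>
        ∃ b : Fin 2, ∀ x ∈ S, ∀ y ∈ S, x ≠ y → g s(x,y) = b)), Fintype.card_prod,
      tuplePart_card G S hS]
    exact Nat.mul_le_mul_left _ (constPart_le S hS)
  refine le_trans (Finset.sum_le_sum hbound) ?_
  rw [Finset.sum_const, Finset.card_powersetCard, Finset.card_univ, Fintype.card_fin,
    smul_eq_mul, mul_assoc]

lemma exists_not_of_card_lt {α : Type*} [Fintype α] {p : α → Prop}
    (h : Fintype.card {x // p x} < Fintype.card α) : ∃ x, ¬ p x := by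
  by_contra hc
  push_neg at hc
  rw [Fintype.card_congr (Equiv.subtypeUnivEquiv hc)] at h
  exact lt_irrefl _ h

/-- The random homomorphism argument: if `C(N,t)·q^{ℓ-2}·2^{1-C(t,2)} < 1` where `q` is the
probability that `t` i.i.d. uniform vertices of a `K_t`-free graph `G` are independent, then
there is an `ℓ`-coloring of `K_N` with no monochromatic `K_t`; in particular `r(t;ℓ) > N`. -/
theorem random_hom_argument (N t ℓ : ℕ) (hN : 0 < N) (ht : 2 ≤ t) (hℓ : 3 ≤ ℓ)
    (M : ℕ) (hM : 0 < M) (G : SimpleGraph (Fin M)) (hG : G.CliqueFree t)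
    (q : ℝ) (hq : q = indepProb t G)
    (h : (N.choose t : ℝ) * q ^ (ℓ - 2) * (2 : ℝ) ^ ((1 : ℤ) - (t.choose 2 : ℤ)) < 1) :
    (∃ c : Sym2 (Fin N) → Fin ℓ,
      ¬ ∃ i : Fin ℓ, ∃ S : Finset (Fin N), S.card = t ∧
          ∀ x ∈ S, ∀ y ∈ S, x ≠ y → c s(x, y) = i) ∧
    N < multiRamsey t ℓ := by
  have hgood : ∃ ω : (Fin (ℓ-2) → Fin N → Fin M) × (Sym2 (Fin N) → Fin 2),
      ¬ Bad t (ℓ-2) G ω := by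
    by_cases htN : t ≤ N
    · apply exists_not_of_card_lt
      apply lt_of_le_of_lt (card_bad_le G)
      have hΩ : Fintype.card ((Fin (ℓ-2) → Fin N → Fin M) × (Sym2 (Fin N) → Fin 2))
          = (M ^ N) ^ (ℓ-2) * 2 ^ (Fintype.card (Sym2 (Fin N))) := by
        rw [Fintype.card_prod, Fintype.card_fun, Fintype.card_fun, Fintype.card_fun]
        simp [Fintype.card_fin]
      rw [hΩ]
      set Q := Nat.card {f : Fin t → Fin M // ∀ i j, ¬ G.Adj (f i) (f j)} with hQdef
      set K := Fintype.card (Sym2 (Fin N)) with hKdef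
      set c2 := t.choose 2 with hc2def
      -- c2 ≤ K
      obtain ⟨S₀, -, hS₀⟩ := Finset.exists_subset_card_eq
        (show t ≤ (Finset.univ : Finset (Fin N)).card by simpa using htN)
      have hc2K : c2 ≤ K := by
        have h1 : (S₀.sym2.filter fun e => ¬ e.IsDiag).card = c2 := by rw [ES_card, hS₀]
        calc c2 = (S₀.sym2.filter fun e => ¬ e.IsDiag).card := h1.symm
          _ ≤ K := by
              rw [hKdef, ← Finset.card_univ]
              exact Finset.card_le_card (Finset.subset_univ _)
      -- move to the reals
      have hM0 : (0:ℝ) < (M:ℝ) := by exact_mod_cast hM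
      have hq' : q = (Q : ℝ) / (M:ℝ)^t := by
        rw [hq, indepProb]
        simp [hQdef, Fintype.card_fin]
      have hreal : ((N.choose t : ℝ) * ((Q:ℝ) * (M:ℝ)^(N-t))^(ℓ-2) * (2 * 2^(K - c2)))
          < ((M:ℝ)^N)^(ℓ-2) * 2^K := by
        have eMc : t + (N - t) = N := Nat.add_sub_cancel' htN
        have e2c : c2 + (K - c2) = K := Nat.add_sub_cancel' hc2K
        have hMc : (M:ℝ)^t * (M:ℝ)^(N-t) = (M:ℝ)^N := by
          rw [← pow_add, eMc]
        have h2c : (2:ℝ)^c2 * 2^(K - c2) = 2^K := by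
          rw [← pow_add, e2c]
        have hzz : (2:ℝ) ^ ((1:ℤ) - (c2:ℤ)) = 2 / 2^c2 := by
          rw [zpow_sub₀ (two_ne_zero), zpow_one, zpow_natCast]
        have hfac1 : ((Q:ℝ)/(M:ℝ)^t) * (M:ℝ)^N = (Q:ℝ) * (M:ℝ)^(N-t) := by
          rw [← hMc]
          field_simp
        have hfac2 : (2:ℝ)/2^c2 * 2^K = 2 * 2^(K - c2) := by
          rw [← h2c]
          field_simp
        have hkey : ((N.choose t : ℝ) * q ^ (ℓ-2) * (2:ℝ) ^ ((1:ℤ) - (c2:ℤ)))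
            * (((M:ℝ)^N)^(ℓ-2) * 2^K)
            = (N.choose t : ℝ) * ((Q:ℝ) * (M:ℝ)^(N-t))^(ℓ-2) * (2 * 2^(K - c2)) := by
          rw [hq', hzz, ← hfac1, ← hfac2, mul_pow]
          ring
        have hRpos : (0:ℝ) < ((M:ℝ)^N)^(ℓ-2) * 2^K := by positivity
        calc ((N.choose t : ℝ) * ((Q:ℝ) * (M:ℝ)^(N-t))^(ℓ-2) * (2 * 2^(K - c2)))
            = ((N.choose t : ℝ) * q ^ (ℓ-2) * (2:ℝ) ^ ((1:ℤ) - (c2:ℤ)))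
              * (((M:ℝ)^N)^(ℓ-2) * 2^K) := hkey.symm
          _ < 1 * (((M:ℝ)^N)^(ℓ-2) * 2^K) := by
              apply mul_lt_mul_of_pos_right _ hRpos
              exact h
          _ = ((M:ℝ)^N)^(ℓ-2) * 2^K := one_mul _
      exact_mod_cast hreal
    · refine ⟨(fun _ _ => ⟨0, hM⟩, fun _ => 0), ?_⟩
      rintro ⟨S, hcard, -, -⟩
      have := Finset.card_le_univ S
      simp only [Finset.card_univ, Fintype.card_fin] at this
      omega
  obtain ⟨ω, hω⟩ := hgood
  have hnomono := no_mono_of_not_bad hℓ G hG ω hω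
  refine ⟨⟨myColoring hℓ G ω.1 ω.2, hnomono⟩, ?_⟩
  have hne : Set.Nonempty {n | ramseyProp n t ℓ} :=
    ⟨_, ramseyProp_holds t ℓ (by omega)⟩
  by_contra hcon
  push_neg at hcon
  have hmem : ramseyProp (multiRamsey t ℓ) t ℓ := Nat.sInf_mem hne
  exact hnomono (ramseyProp_mono hcon hmem (myColoring hℓ G ω.1 ω.2))
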